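/- Let F be a field and let r, m be positive integers with r < m. Then there is an injective group homomorphism from the special linear group SL(r, F) into the projective special linear group PSL(m, F); in particular SL(r, F) is isomorphic to a subgroup of PSL(m, F). -/

import Mathlib

/-- The projective special linear group `PSL(n, F)`: the quotient of `SL(n, F)` by its center. -/
abbrev PSL (n : ℕ) (F : Type) [Field F] :=
  Matrix.SpecialLinearGroup (Fin n) F ⧸ Subgroup.center (Matrix.SpecialLinearGroup (Fin n) F)

/-- For `r < m`, the special linear group `SL(r, F)` embeds into the projective special linear
group `PSL(m, F)`; in particular `SL(r, F)` is isomorphic to a subgroup of `PSL(m, F)`. -/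
theorem sl_embeds_in_psl (F : Type) [Field F] (r m : ℕ) (hr : 0 < r) (hm : 0 < m)
    (hrm : r < m) :
    ∃ ψ : Matrix.SpecialLinearGroup (Fin r) F →* PSL m F, Function.Injective ψ := by
  have h : r + (m - r) = m := by omega
  let e : Fin r ⊕ Fin (m - r) ≃ Fin m := finSumFinEquiv.trans (finCongr h)
  let E := Matrix.reindexAlgEquiv F F e
  let f : Matrix.SpecialLinearGroup (Fin r) F →* Matrix.SpecialLinearGroup (Fin m) F :=
    { toFun := fun A => ⟨E (Matrix.fromBlocks (A : Matrix (Fin r) (Fin r) F) 0 0 1), by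
        simp [E, Matrix.reindexAlgEquiv, Matrix.det_fromBlocks_zero₂₁, A.2]⟩
      map_one' := by
        ext i j
        simp [E, Matrix.reindexAlgEquiv, Matrix.fromBlocks_one, Matrix.one_apply, Equiv.symm_apply_eq]
      map_mul' := fun A B => by
        ext i j
        simp only [Matrix.SpecialLinearGroup.coe_mul]
        change E _ i j = (E (Matrix.fromBlocks (A : Matrix (Fin r) (Fin r) F) 0 0 1) * E (Matrix.fromBlocks (B : Matrix (Fin r) (Fin r) F) 0 0 1)) i j
        rw [← map_mul E]
        simp [Matrix.fromBlocks_multiply] }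
  have hf : ∀ A : Matrix.SpecialLinearGroup (Fin r) F,
      ∀ i j : Fin r, (f A : Matrix (Fin m) (Fin m) F) (e (Sum.inl i)) (e (Sum.inl j)) = A i j := by
    intro A i j
    show E (Matrix.fromBlocks (A : Matrix (Fin r) (Fin r) F) 0 0 1) (e (Sum.inl i)) (e (Sum.inl j)) = A i j
    simp [f, E, Matrix.reindexAlgEquiv, Matrix.reindex, MonoidHom.coe_mk, OneHom.coe_mk]
  have hlast : ∀ A : Matrix.SpecialLinearGroup (Fin r) F,
      ∀ k : Fin (m - r), (f A : Matrix (Fin m) (Fin m) F) (e (Sum.inr k)) (e (Sum.inr k)) = 1 := by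
    intro A k
    show E (Matrix.fromBlocks (A : Matrix (Fin r) (Fin r) F) 0 0 1) (e (Sum.inr k)) (e (Sum.inr k)) = 1
    simp [f, E, Matrix.reindexAlgEquiv, Matrix.reindex, MonoidHom.coe_mk, OneHom.coe_mk]
  have hmr : 0 < m - r := by omega
  refine ⟨(QuotientGroup.mk' _).comp f, ?_⟩
  rw [← MonoidHom.ker_eq_bot_iff, eq_bot_iff]
  intro A hA
  simp only [MonoidHom.mem_ker, MonoidHom.comp_apply, QuotientGroup.mk'_apply,
    QuotientGroup.eq_one_iff] at hA
  obtain ⟨s, hs, hsc⟩ := Matrix.SpecialLinearGroup.mem_center_iff.mp hA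
  have h1 : s = 1 := by
    have := hlast A ⟨0, hmr⟩
    have h2 := congrFun (congrFun hsc (e (Sum.inr ⟨0, hmr⟩))) (e (Sum.inr ⟨0, hmr⟩))
    simpa [this, Matrix.scalar_apply] using h2
  have hA1 : A = 1 := by
    ext i j
    have h2 := congrFun (congrFun hsc (e (Sum.inl i))) (e (Sum.inl j))
    rw [hf A i j] at h2
    rcases eq_or_ne i j with rfl | hij
    · simpa [h1, Matrix.scalar_apply] using h2.symm
    · have : e (Sum.inl i) ≠ e (Sum.inl j) := by
        simp [e.injective.ne_iff, hij]
      simpa [h1, Matrix.scalar_apply, Matrix.one_apply, this, hij] using h2.symm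
  simp [hA1]
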